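/- arXiv:1507.02337 — 7 statements merged into one kernel-verified Lean document; each statement's English description precedes it below -/
import Mathlib

section
/- Let A be a topological algebra with an orthogonal basis (e_n). Then each coefficient functional e_n^* is continuous; that is, every orthogonal basis is a Schauder basis. -/
open Filter Topology

/-- `x = Σ_{n} a n • e n` as convergence of ordered partial sums. -/
def HasExpansion {A : Type*} [AddCommMonoid A] [Module ℂ A] [TopologicalSpace A]
    (a : ℕ → ℂ) (e : ℕ → A) (x : A) : Prop :=
  Tendsto (fun N => ∑ n ∈ Finset.range N, a n • e n) atTop (𝓝 x)

/-- Every orthogonal basis of a topological algebra is a Schauder basis. -/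
theorem stmt1 {A : Type*} [NonUnitalRing A] [Module ℂ A] [SMulCommClass ℂ A A]
    [IsScalarTower ℂ A A] [TopologicalSpace A] [T2Space A] [IsTopologicalAddGroup A]
    [ContinuousSMul ℂ A]
    (hmul : ∀ y : A, Continuous (fun x => x * y) ∧ Continuous (fun x => y * x))
    (e : ℕ → A) (coef : A → ℕ → ℂ)
    (horth : ∀ i j, e i * e j = if i = j then e i else 0)
    (hbasis : ∀ x, HasExpansion (coef x) e x)
    (huniq : ∀ x a, HasExpansion a e x → a = coef x) :
    ∀ n : ℕ, Continuous (fun x => coef x n) := by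
  intro n
  have hcoef0 : (fun _ : ℕ => (0 : ℂ)) = coef 0 := by
    apply huniq
    simp [HasExpansion, tendsto_const_nhds]
  have hne : e n ≠ 0 := by
    intro h
    have hexp : HasExpansion (fun i => if i = n then (1 : ℂ) else 0) e 0 := by
      have : ∀ N, ∑ i ∈ Finset.range N, (if i = n then (1 : ℂ) else 0) • e i = 0 := by
        intro N
        apply Finset.sum_eq_zero
        intro i _
        by_cases hi : i = n
        · simp [hi, h]
        · simp [hi]
      simp only [HasExpansion, this]
      exact tendsto_const_nhds
    have h1 := congrFun (huniq 0 _ hexp) n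
    simp at h1
    exact one_ne_zero (h1.trans (congrFun hcoef0 n).symm)
  have key : ∀ x : A, x * e n = coef x n • e n := by
    intro x
    have h1 : Tendsto (fun N => (∑ i ∈ Finset.range N, coef x i • e i) * e n)
        atTop (𝓝 (x * e n)) := ((hmul (e n)).1.tendsto x).comp (hbasis x)
    have h2 : (fun N => (∑ i ∈ Finset.range N, coef x i • e i) * e n)
        =ᶠ[atTop] (fun _ => coef x n • e n) := by
      filter_upwards [eventually_ge_atTop (n + 1)] with N hN
      rw [Finset.sum_mul, Finset.sum_eq_single n]
      · rw [smul_mul_assoc, horth n n]; simp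
      · intro i _ hin
        rw [smul_mul_assoc, horth i n, if_neg hin, smul_zero]
      · intro hcon
        exact absurd (Finset.mem_range.2 (by omega)) hcon
    exact tendsto_nhds_unique h1 (tendsto_const_nhds.congr' h2.symm)
  let ev : ℂ ≃ₗ[ℂ] Submodule.span ℂ {e n} :=
    LinearEquiv.toSpanNonzeroSingleton ℂ A (e n) hne
  have hc : Continuous (ev.symm : Submodule.span ℂ {e n} → ℂ) :=
    LinearMap.continuous_of_finiteDimensional (ev.symm : Submodule.span ℂ {e n} →ₗ[ℂ] ℂ)
  have hmem : ∀ x : A, x * e n ∈ Submodule.span ℂ {e n} := fun x =>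
    Submodule.mem_span_singleton.2 ⟨coef x n, (key x).symm⟩
  have hm : Continuous (fun x : A => (⟨x * e n, hmem x⟩ : Submodule.span ℂ {e n})) :=
    (hmul (e n)).1.subtype_mk _
  have heq : (fun x : A => coef x n)
      = fun x : A => ev.symm (⟨x * e n, hmem x⟩ : Submodule.span ℂ {e n}) := by
    funext x
    rw [eq_comm, LinearEquiv.symm_apply_eq]
    apply Subtype.ext
    simp [ev, LinearEquiv.toSpanNonzeroSingleton_apply, key x]
  rw [heq]
  exact hc.comp hm
end

section
/- Let A be a topological algebra with an orthogonal basis (e_n), and let f be a multiplicative linear functional on A. If f(e_{n_0}) ≠ 0 for some n_0, then f = e_{n_0}^*, the n_0-th coefficient functional. -/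
open Filter Topology

/-- If a multiplicative linear functional is nonzero on some basis vector, it is the
corresponding coefficient functional. -/
theorem stmt2 {A : Type*} [NonUnitalRing A] [Module ℂ A] [SMulCommClass ℂ A A]
    [IsScalarTower ℂ A A] [TopologicalSpace A] [T2Space A] [IsTopologicalAddGroup A]
    [ContinuousSMul ℂ A]
    (hmul : ∀ y : A, Continuous (fun x => x * y) ∧ Continuous (fun x => y * x))
    (e : ℕ → A) (coef : A → ℕ → ℂ)
    (horth : ∀ i j, e i * e j = if i = j then e i else 0)
    (hbasis : ∀ x, HasExpansion (coef x) e x)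
    (huniq : ∀ x a, HasExpansion a e x → a = coef x)
    (f : A → ℂ) (hf : IsLinearMap ℂ f) (hfm : ∀ x y, f (x * y) = f x * f y)
    (n₀ : ℕ) (h : f (e n₀) ≠ 0) :
    ∀ x, f x = coef x n₀ := by
  intro x
  have key : x * e n₀ = coef x n₀ • e n₀ := by
    have h1 : Filter.Tendsto (fun N => (∑ n ∈ Finset.range N, coef x n • e n) * e n₀)
        atTop (𝓝 (x * e n₀)) :=
      ((hmul (e n₀)).1.tendsto x).comp (hbasis x)
    have h2 : Filter.Tendsto (fun N => (∑ n ∈ Finset.range N, coef x n • e n) * e n₀)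
        atTop (𝓝 (coef x n₀ • e n₀)) := by
      apply Filter.Tendsto.congr' _ tendsto_const_nhds
      filter_upwards [Filter.eventually_ge_atTop (n₀ + 1)] with N hN
      rw [Finset.sum_mul]
      have : ∀ n ∈ Finset.range N, (coef x n • e n) * e n₀
          = if n = n₀ then coef x n₀ • e n₀ else 0 := by
        intro n _
        rw [smul_mul_assoc, horth]
        split
        · subst ‹n = n₀›; rfl
        · exact smul_zero _
      rw [Finset.sum_congr rfl this, Finset.sum_ite_eq' (Finset.range N) n₀]
      simp [Finset.mem_range, Nat.lt_of_succ_le hN]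
    exact tendsto_nhds_unique h1 h2
  have := hfm x (e n₀)
  rw [key, hf.map_smul, smul_eq_mul] at this
  exact mul_right_cancel₀ h this.symm
end

section
/- Let A be a topological algebra with an orthogonal basis (e_n). Then the set of nonzero continuous multiplicative linear functionals on A is exactly {e_n^* : n ≥ 1}. -/
open Filter Topology

section Aux

variable {A : Type*} [NonUnitalRing A] [Module ℂ A] [SMulCommClass ℂ A A]
    [IsScalarTower ℂ A A] [TopologicalSpace A] [T2Space A] [IsTopologicalAddGroup A]
    [ContinuousSMul ℂ A]

lemma aux_single_tendsto (e : ℕ → A) (n : ℕ) (c : ℂ) :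
    Tendsto (fun N => ∑ k ∈ Finset.range N, (if k = n then c else 0) • e k) atTop
      (𝓝 (c • e n)) := by
  apply Tendsto.congr' _ tendsto_const_nhds
  filter_upwards [eventually_ge_atTop (n + 1)] with N hN
  rw [eq_comm]
  have hn : n ∈ Finset.range N := Finset.mem_range.mpr hN
  simp [ite_smul, Finset.sum_ite_eq', hn]

lemma aux_e_ne_zero (e : ℕ → A) (coef : A → ℕ → ℂ)
    (huniq : ∀ x a, HasExpansion a e x → a = coef x) (n : ℕ) : e n ≠ 0 := by
  intro h0
  have h1 : HasExpansion (fun k => if k = n then (1 : ℂ) else 0) e 0 := by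
    have := aux_single_tendsto e n (1 : ℂ)
    rwa [h0, smul_zero] at this
  have h2 : HasExpansion (fun _ => (0 : ℂ)) e 0 := by
    unfold HasExpansion
    simpa using (tendsto_const_nhds : Tendsto (fun _ : ℕ => (0 : A)) atTop (𝓝 0))
  have := (huniq 0 _ h1).trans (huniq 0 _ h2).symm
  simpa using congrFun this n

lemma aux_coef_e (e : ℕ → A) (coef : A → ℕ → ℂ)
    (hbasis : ∀ x, HasExpansion (coef x) e x)
    (huniq : ∀ x a, HasExpansion a e x → a = coef x) (n : ℕ) :
    coef (e n) = fun k => if k = n then (1 : ℂ) else 0 := by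
  refine (huniq (e n) _ ?_).symm
  have := aux_single_tendsto e n (1 : ℂ)
  rwa [one_smul] at this

lemma aux_mul_e (hmul : ∀ y : A, Continuous (fun x => x * y) ∧ Continuous (fun x => y * x))
    (e : ℕ → A) (coef : A → ℕ → ℂ)
    (horth : ∀ i j, e i * e j = if i = j then e i else 0)
    (hbasis : ∀ x, HasExpansion (coef x) e x) (x : A) (n : ℕ) :
    x * e n = coef x n • e n := by
  have h1 : Tendsto (fun N => (∑ k ∈ Finset.range N, coef x k • e k) * e n) atTop
      (𝓝 (x * e n)) := ((hmul (e n)).1.tendsto x).comp (hbasis x)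
  have h2 : Tendsto (fun N => (∑ k ∈ Finset.range N, coef x k • e k) * e n) atTop
      (𝓝 (coef x n • e n)) := by
    apply Tendsto.congr' _ tendsto_const_nhds
    filter_upwards [eventually_ge_atTop (n + 1)] with N hN
    have hn : n ∈ Finset.range N := Finset.mem_range.mpr hN
    rw [eq_comm, Finset.sum_mul]
    calc ∑ k ∈ Finset.range N, coef x k • e k * e n
        = ∑ k ∈ Finset.range N, (if k = n then coef x k • e k else 0) := by
          refine Finset.sum_congr rfl fun k _ => ?_
          rw [smul_mul_assoc, horth]
          split <;> simp
      _ = coef x n • e n := by rw [Finset.sum_ite_eq', if_pos hn]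
  exact tendsto_nhds_unique h1 h2

lemma aux_smul_cancel {v : A} (hv : v ≠ 0) {c d : ℂ} (h : c • v = d • v) : c = d := by
  by_contra hcd
  apply hv
  have h1 : (c - d) • v = 0 := by rw [sub_smul, h, sub_self]
  have h2 : c - d ≠ 0 := sub_ne_zero.mpr hcd
  calc v = (c - d)⁻¹ • ((c - d) • v) := by rw [inv_smul_smul₀ h2]
    _ = 0 := by rw [h1, smul_zero]

end Aux

/-- The nonzero continuous multiplicative linear functionals are exactly the coefficient
functionals of the orthogonal basis. -/
theorem stmt3 {A : Type*} [NonUnitalRing A] [Module ℂ A] [SMulCommClass ℂ A A]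
    [IsScalarTower ℂ A A] [TopologicalSpace A] [T2Space A] [IsTopologicalAddGroup A]
    [ContinuousSMul ℂ A]
    (hmul : ∀ y : A, Continuous (fun x => x * y) ∧ Continuous (fun x => y * x))
    (e : ℕ → A) (coef : A → ℕ → ℂ)
    (horth : ∀ i j, e i * e j = if i = j then e i else 0)
    (hbasis : ∀ x, HasExpansion (coef x) e x)
    (huniq : ∀ x a, HasExpansion a e x → a = coef x) :
    ∀ f : A → ℂ,
      (IsLinearMap ℂ f ∧ (∀ x y, f (x * y) = f x * f y) ∧ f ≠ 0 ∧ Continuous f) ↔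
        ∃ n, f = fun x => coef x n := by
  intro f
  constructor
  · rintro ⟨hlin, hm, hne, hc⟩
    set L : A →ₗ[ℂ] ℂ := IsLinearMap.mk' f hlin with hL
    have hLf : ∀ x, L x = f x := fun _ => rfl
    -- f (e k) is 0 or 1
    have f01 : ∀ k, f (e k) = 0 ∨ f (e k) = 1 := by
      intro k
      have h := hm (e k) (e k)
      rw [horth, if_pos rfl] at h
      have h' : f (e k) * (f (e k) - 1) = 0 := by linear_combination -h
      rcases mul_eq_zero.mp h' with h1 | h1
      · exact Or.inl h1
      · exact Or.inr (sub_eq_zero.mp h1)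
    -- the limit formula for f
    have hflim : ∀ x, Tendsto (fun N => ∑ k ∈ Finset.range N, coef x k * f (e k)) atTop
        (𝓝 (f x)) := by
      intro x
      have h1 : Tendsto (fun N => f (∑ k ∈ Finset.range N, coef x k • e k)) atTop
          (𝓝 (f x)) := (hc.tendsto x).comp (hbasis x)
      convert h1 using 2 with N
      rw [← hLf, map_sum]
      exact Finset.sum_congr rfl fun k _ => by rw [map_smul, smul_eq_mul, hLf]
    -- there exists n with f (e n) = 1
    have hex : ∃ n, f (e n) = 1 := by
      by_contra hno
      push_neg at hno
      have hz : ∀ k, f (e k) = 0 := fun k => (f01 k).resolve_right (hno k)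
      apply hne
      funext x
      have h1 := hflim x
      simp only [hz, mul_zero, Finset.sum_const_zero] at h1
      show f x = 0
      exact tendsto_nhds_unique h1 tendsto_const_nhds
    obtain ⟨n, hn⟩ := hex
    -- f (e m) = 0 for m ≠ n
    have hzero : ∀ m, m ≠ n → f (e m) = 0 := by
      intro m hmn
      have h := hm (e m) (e n)
      rw [horth, if_neg hmn, hn, mul_one, ← hLf, map_zero] at h
      exact h.symm
    refine ⟨n, funext fun x => ?_⟩
    have h2 : Tendsto (fun N => ∑ k ∈ Finset.range N, coef x k * f (e k)) atTop
        (𝓝 (coef x n)) := by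
      apply Tendsto.congr' _ tendsto_const_nhds
      filter_upwards [eventually_ge_atTop (n + 1)] with N hN
      have hnm : n ∈ Finset.range N := Finset.mem_range.mpr hN
      rw [eq_comm]
      calc ∑ k ∈ Finset.range N, coef x k * f (e k)
          = ∑ k ∈ Finset.range N, (if k = n then coef x k else 0) := by
            refine Finset.sum_congr rfl fun k _ => ?_
            by_cases hk : k = n
            · subst hk; rw [if_pos rfl, hn, mul_one]
            · rw [if_neg hk, hzero k hk, mul_zero]
        _ = coef x n := by rw [Finset.sum_ite_eq', if_pos hnm]
    exact tendsto_nhds_unique (hflim x) h2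
  · rintro ⟨n, rfl⟩
    have hen : e n ≠ 0 := aux_e_ne_zero e coef huniq n
    -- additivity
    have hadd : ∀ x y : A, coef (x + y) = fun k => coef x k + coef y k := by
      intro x y
      refine (huniq (x + y) _ ?_).symm
      unfold HasExpansion
      have := (hbasis x).add (hbasis y)
      simpa [add_smul, Finset.sum_add_distrib] using this
    have hsmul : ∀ (c : ℂ) (x : A), coef (c • x) = fun k => c * coef x k := by
      intro c x
      refine (huniq (c • x) _ ?_).symm
      unfold HasExpansion
      have := (hbasis x).const_smul c
      simpa [mul_smul, Finset.smul_sum] using this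
    refine ⟨⟨fun x y => by rw [hadd], fun c x => by rw [hsmul]; rfl⟩, ?_, ?_, ?_⟩
    · -- multiplicativity
      intro x y
      have h1 : (x * y) * e n = coef (x * y) n • e n :=
        aux_mul_e hmul e coef horth hbasis (x * y) n
      have h2 : (x * y) * e n = (coef x n * coef y n) • e n := by
        rw [mul_assoc, aux_mul_e hmul e coef horth hbasis y n, mul_smul_comm,
          aux_mul_e hmul e coef horth hbasis x n, smul_smul, mul_comm]
      exact aux_smul_cancel hen (h1.symm.trans h2)
    · -- nonzero
      intro h0
      have h1 := congrFun h0 (e n)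
      rw [aux_coef_e e coef hbasis huniq n] at h1
      simpa using h1
    · -- continuity
      have hmem : ∀ x : A, x * e n ∈ Submodule.span ℂ {e n} := by
        intro x
        rw [aux_mul_e hmul e coef horth hbasis x n]
        exact Submodule.smul_mem _ _ (Submodule.subset_span rfl)
      have hcont1 : Continuous (fun x : A => (⟨x * e n, hmem x⟩ :
          Submodule.span ℂ {e n})) :=
        Continuous.subtype_mk (hmul (e n)).1 _
      have hcont2 : Continuous (LinearEquiv.coord ℂ A (e n) hen) :=
        (LinearEquiv.coord ℂ A (e n) hen).toLinearMap.continuous_of_finiteDimensional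
      have key : (fun x : A => coef x n) =
          (LinearEquiv.coord ℂ A (e n) hen) ∘ (fun x => ⟨x * e n, hmem x⟩) := by
        funext x
        simp only [Function.comp_apply]
        have : (⟨x * e n, hmem x⟩ : Submodule.span ℂ {e n}) =
            ⟨coef x n • e n, by rw [← aux_mul_e hmul e coef horth hbasis x n]; exact hmem x⟩ := by
          exact Subtype.ext (aux_mul_e hmul e coef horth hbasis x n)
        rw [this, LinearEquiv.coord, eq_comm, LinearEquiv.symm_apply_eq,
          LinearEquiv.toSpanNonzeroSingleton_apply]
      rw [key]
      exact hcont2.comp hcont1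
end

section
/- Let (A, (‖·‖_i)_{i≥1}) be a unital B_0-algebra with an orthogonal basis (e_n). Then there exists x ∈ A such that the sequence (e_n^*(x))_{n≥1} of coefficients of x is unbounded. -/
open Filter Topology

private lemma seminorm_sum_le' {A : Type*} [Ring A] [Module ℂ A] (q : Seminorm ℂ A)
    {ι : Type*} (s : Finset ι) (f : ι → A) : q (∑ i ∈ s, f i) ≤ ∑ i ∈ s, q (f i) := by
  classical
  induction s using Finset.induction with
  | empty => simp
  | @insert a s h ih =>
    rw [Finset.sum_insert h, Finset.sum_insert h]
    exact (map_add_le_add q _ _).trans (by gcongr)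


/-- In a unital B₀-algebra with orthogonal basis, some element has unbounded coefficients. -/
theorem stmt5 {A : Type*} [Ring A] [Algebra ℂ A] [UniformSpace A] [T2Space A]
    [IsUniformAddGroup A] [ContinuousSMul ℂ A] [CompleteSpace A]
    (p : ℕ → Seminorm ℂ A) (hp : WithSeminorms p)
    (hmono : ∀ i x, p i x ≤ p (i + 1) x)
    (hsub : ∀ i x y, p i (x * y) ≤ p (i + 1) x * p (i + 1) y)
    (e : ℕ → A) (coef : A → ℕ → ℂ)
    (horth : ∀ i j, e i * e j = if i = j then e i else 0)
    (hbasis : ∀ x, HasExpansion (coef x) e x)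
    (huniq : ∀ x a, HasExpansion a e x → a = coef x) :
    ∃ x : A, ¬ ∃ M : ℝ, ∀ n, ‖coef x n‖ ≤ M := by
  classical
  -- monotonicity over all pairs
  have hmono' : ∀ i j, i ≤ j → ∀ x, p i x ≤ p j x := by
    intro i j hij
    induction j, hij using Nat.le_induction with
    | base => intro x; rfl
    | succ j hij ih => intro x; exact (ih x).trans (hmono j x)
  -- each e k is nonzero
  have he0 : ∀ k, e k ≠ 0 := by
    intro k hk
    have h1 : HasExpansion (fun n => if n = k then (1 : ℂ) else 0) e 0 := by
      have : ∀ N, ∑ n ∈ Finset.range N, (if n = k then (1 : ℂ) else 0) • e n = 0 := by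
        intro N
        apply Finset.sum_eq_zero
        intro n _
        by_cases h : n = k <;> simp [h, hk]
      unfold HasExpansion
      rw [funext this]
      exact tendsto_const_nhds
    have h2 : HasExpansion (fun _ => (0 : ℂ)) e 0 := by
      simpa [HasExpansion] using (tendsto_const_nhds : Tendsto (fun _ : ℕ => (0:A)) atTop (𝓝 0))
    have := (huniq 0 _ h1).trans (huniq 0 _ h2).symm
    simpa using congrFun this k
  -- partial sums of the expansion of 1
  set S : ℕ → A := fun N => ∑ n ∈ Finset.range N, coef 1 n • e n with hS_def
  have hS : Tendsto S atTop (𝓝 (1 : A)) := hbasis 1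
  -- coefficients of 1 are all 1
  have hc1 : ∀ k, coef 1 k = 1 := by
    intro k
    have hmulS : ∀ N, k < N → e k * S N = coef 1 k • e k := by
      intro N hkN
      rw [hS_def]
      simp only [Finset.mul_sum]
      have : ∀ n ∈ Finset.range N, e k * (coef 1 n • e n) =
          if k = n then coef 1 n • e k else 0 := by
        intro n _
        rw [mul_smul_comm, horth k n]
        by_cases h : k = n <;> simp [h]
      rw [Finset.sum_congr rfl this, Finset.sum_ite_eq (Finset.range N) k
        (fun n => coef 1 n • e k)]
      simp [Finset.mem_range.mpr hkN]
    -- e k * S N → e k * 1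
    have hmul_tendsto : Tendsto (fun N => e k * S N) atTop (𝓝 (e k * 1)) := by
      rw [hp.tendsto_nhds]
      intro i ε hε
      set C : ℝ := p (i + 1) (e k) with hC
      have hCnn : 0 ≤ C := apply_nonneg _ _
      have hε' : 0 < ε / (C + 1) := by positivity
      have hSnear : ∀ᶠ N in atTop, p (i + 1) (S N - 1) < ε / (C + 1) := by
        have := (hp.tendsto_nhds S (1 : A)).mp hS (i + 1) _ hε'
        exact this
      filter_upwards [hSnear] with N hN
      have h1 : e k * S N - e k * 1 = e k * (S N - 1) := (mul_sub _ _ _).symm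
      rw [h1]
      calc p i (e k * (S N - 1)) ≤ C * p (i + 1) (S N - 1) := hsub i _ _
        _ ≤ C * (ε / (C + 1)) := by
            apply mul_le_mul_of_nonneg_left hN.le hCnn
        _ < ε := by
            rw [div_eq_inv_mul, ← mul_assoc]
            have : C * (C + 1)⁻¹ < 1 := by
              rw [mul_inv_lt_iff₀ (by positivity), one_mul]; linarith
            nlinarith
    have hconst : Tendsto (fun N => e k * S N) atTop (𝓝 (coef 1 k • e k)) := by
      apply Tendsto.congr' _ (tendsto_const_nhds : Tendsto (fun _ : ℕ => coef 1 k • e k) atTop _)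
      filter_upwards [eventually_gt_atTop k] with N hN
      exact (hmulS N hN).symm
    have heq : coef 1 k • e k = e k := by
      have := tendsto_nhds_unique hconst hmul_tendsto
      simpa using this
    by_contra h
    apply he0 k
    have : (coef 1 k - 1) • e k = 0 := by rw [sub_smul, one_smul, heq, sub_self]
    rcases smul_eq_zero.mp this with h' | h'
    · exact absurd (sub_eq_zero.mp h') h
    · exact h'
  -- e n → 0
  have heto0 : Tendsto e atTop (𝓝 (0 : A)) := by
    have hdiff : Tendsto (fun N => S (N + 1) - S N) atTop (𝓝 (0 : A)) := by
      have h1 : Tendsto (fun N => S (N + 1)) atTop (𝓝 (1 : A)) :=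
        hS.comp (tendsto_add_atTop_nat 1)
      simpa using h1.sub hS
    have heq : (fun N => S (N + 1) - S N) = e := by
      funext N
      rw [hS_def]
      simp [Finset.sum_range_succ, hc1 N]
    rwa [heq] at hdiff
  have hsmall : ∀ i (ε : ℝ), 0 < ε → ∃ N₀, ∀ m ≥ N₀, p i (e m) < ε := by
    intro i ε hε
    have := (hp.tendsto_nhds e (0 : A)).mp heto0 i ε hε
    simpa [eventually_atTop] using this
  -- choose a rapidly decaying subsequence
  have hsel : ∀ k m, ∃ j, m < j ∧ p k (e j) < (4 : ℝ)⁻¹ ^ k := by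
    intro k m
    obtain ⟨N₀, hN₀⟩ := hsmall k ((4 : ℝ)⁻¹ ^ k) (by positivity)
    exact ⟨max N₀ (m + 1), lt_of_lt_of_le (Nat.lt_succ_self m) (le_max_right _ _),
      hN₀ _ (le_max_left _ _)⟩
  choose f hf1 hf2 using hsel
  set n : ℕ → ℕ := fun k => Nat.rec (f 0 0) (fun k ih => f (k + 1) ih) k with hn_def
  have hnsucc : ∀ k, n (k + 1) = f (k + 1) (n k) := fun k => rfl
  have hnmono : StrictMono n :=
    strictMono_nat_of_lt_succ (fun k => by rw [hnsucc]; exact hf1 (k + 1) (n k))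
  have hne : ∀ k, p k (e (n k)) < (4 : ℝ)⁻¹ ^ k := by
    intro k
    cases k with
    | zero => exact hf2 0 0
    | succ k => rw [hnsucc]; exact hf2 (k + 1) (n k)
  -- the unbounded coefficient sequence
  set a : ℕ → ℂ := fun m => if h : ∃ k, n k = m then (2 : ℂ) ^ h.choose else 0 with ha_def
  have hak : ∀ k, a (n k) = (2 : ℂ) ^ k := by
    intro k
    have h : ∃ j, n j = n k := ⟨k, rfl⟩
    rw [ha_def]
    simp only [dif_pos h]
    congr 1
    exact hnmono.injective h.choose_spec
  have ha0 : ∀ m, (¬ ∃ k, n k = m) → a m = 0 := by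
    intro m h; rw [ha_def]; simp [h]
  set T : ℕ → A := fun N => ∑ m ∈ Finset.range N, a m • e m with hT_def
  -- reindexing the partial-sum differences
  have hblock : ∀ N N', N ≤ N' → T N' - T N =
      ∑ k ∈ (Finset.range N').filter (fun k => n k ∈ Finset.Ico N N'), (2 : ℂ) ^ k • e (n k) := by
    intro N N' hNN'
    have h1 : T N' - T N = ∑ m ∈ Finset.Ico N N', a m • e m := by
      rw [hT_def]
      exact (Finset.sum_Ico_eq_sub _ hNN').symm
    rw [h1]
    set t := (Finset.range N').filter (fun k => n k ∈ Finset.Ico N N') with ht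
    have himg : t.image n ⊆ Finset.Ico N N' := by
      intro m hm
      simp only [ht, Finset.mem_image, Finset.mem_filter] at hm
      obtain ⟨k, ⟨_, hk2⟩, rfl⟩ := hm
      exact hk2
    rw [← Finset.sum_subset himg ?_]
    · rw [Finset.sum_image (fun x _ y _ h => hnmono.injective h)]
      exact Finset.sum_congr rfl (fun k _ => by rw [hak k])
    · intro m hm hm'
      have hnotin : ¬ ∃ k, n k = m := by
        rintro ⟨k, rfl⟩
        apply hm'
        simp only [ht, Finset.mem_image, Finset.mem_filter]
        refine ⟨k, ⟨Finset.mem_range.mpr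
          (lt_of_le_of_lt hnmono.le_apply (Finset.mem_Ico.mp hm).2), hm⟩, rfl⟩
      rw [ha0 m hnotin, zero_smul]
  -- the key tail estimate
  have hest : ∀ i K N N', i ≤ K → n K < N → N ≤ N' →
      p i (T N' - T N) ≤ 2 * (2 : ℝ)⁻¹ ^ K := by
    intro i K N N' hiK hNK hNN'
    rw [hblock N N' hNN']
    refine (seminorm_sum_le' (p i) _ _).trans ?_
    set t := (Finset.range N').filter (fun k => n k ∈ Finset.Ico N N') with ht
    have hterm : ∀ k ∈ t, p i ((2 : ℂ) ^ k • e (n k)) ≤ (2 : ℝ)⁻¹ ^ k := by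
      intro k hk
      have hkK : K < k := by
        have h1 : n K < n k := by
          simp only [ht, Finset.mem_filter, Finset.mem_Ico] at hk
          exact lt_of_lt_of_le hNK hk.2.1
        exact hnmono.lt_iff_lt.mp h1
      rw [map_smul_eq_mul]
      have h2 : ‖(2 : ℂ) ^ k‖ = 2 ^ k := by
        rw [norm_pow]; norm_num
      rw [h2]
      calc (2:ℝ) ^ k * p i (e (n k)) ≤ 2 ^ k * p k (e (n k)) := by
            exact mul_le_mul_of_nonneg_left (hmono' i k (hiK.trans hkK.le) _) (by positivity)
        _ ≤ 2 ^ k * (4 : ℝ)⁻¹ ^ k := mul_le_mul_of_nonneg_left (hne k).le (by positivity)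
        _ = (2 : ℝ)⁻¹ ^ k := by
            rw [← mul_pow]; norm_num
    refine (Finset.sum_le_sum hterm).trans ?_
    have hsub2 : t ⊆ Finset.Ico (K + 1) N' := by
      intro k hk
      have hkK : K < k := by
        have h1 : n K < n k := by
          simp only [ht, Finset.mem_filter, Finset.mem_Ico] at hk
          exact lt_of_lt_of_le hNK hk.2.1
        exact hnmono.lt_iff_lt.mp h1
      simp only [ht, Finset.mem_filter, Finset.mem_range] at hk
      exact Finset.mem_Ico.mpr ⟨hkK, hk.1⟩
    refine (Finset.sum_le_sum_of_subset_of_nonneg hsub2 (fun k _ _ => by positivity)).trans ?_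
    refine (geom_sum_Ico_le_of_lt_one (by norm_num) (by norm_num)).trans ?_
    have heq2 : (2:ℝ)⁻¹ ^ (K + 1) / (1 - 2⁻¹) = 2⁻¹ ^ K := by
      rw [pow_succ]; ring
    rw [heq2]
    have hKnn : (0:ℝ) ≤ (2:ℝ)⁻¹ ^ K := by positivity
    linarith
  -- the partial sums are Cauchy
  have hcauchy : CauchySeq T := by
    rw [cauchySeq_iff_tendsto, uniformity_eq_comap_nhds_zero A, tendsto_comap_iff]
    have hco : ((fun x : A × A => x.2 - x.1) ∘ Prod.map T T) = fun q : ℕ × ℕ => T q.2 - T q.1 := rfl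
    rw [hco, hp.tendsto_nhds]
    intro i ε hε
    obtain ⟨K0, hK0⟩ := exists_pow_lt_of_lt_one (half_pos hε) (by norm_num : (2 : ℝ)⁻¹ < 1)
    set K := max K0 i with hK_def
    have hKbound : 2 * (2 : ℝ)⁻¹ ^ K < ε := by
      have h1 : (2 : ℝ)⁻¹ ^ K ≤ 2⁻¹ ^ K0 :=
        pow_le_pow_of_le_one (by norm_num) (by norm_num) (le_max_left _ _)
      nlinarith [hK0]
    rw [eventually_atTop]
    refine ⟨(n K + 1, n K + 1), ?_⟩
    rintro ⟨N1, N2⟩ ⟨h1, h2⟩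
    simp only [sub_zero]
    rcases le_total N1 N2 with h | h
    · exact lt_of_le_of_lt (hest i K N1 N2 (le_max_right _ _) h1 h) hKbound
    · have hh := hest i K N2 N1 (le_max_right _ _) h2 h
      rw [← neg_sub, map_neg_eq_map]
      exact lt_of_le_of_lt hh hKbound
  obtain ⟨x, hx⟩ := cauchySeq_tendsto_of_complete hcauchy
  have hxa : a = coef x := huniq x a hx
  refine ⟨x, ?_⟩
  rintro ⟨M, hM⟩
  obtain ⟨k, hk⟩ := pow_unbounded_of_one_lt M (by norm_num : (1 : ℝ) < 2)
  have hMk := hM (n k)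
  rw [← hxa, hak k] at hMk
  have hnorm : ‖(2 : ℂ) ^ k‖ = 2 ^ k := by rw [norm_pow]; norm_num
  rw [hnorm] at hMk
  linarith
end

section
/- Let (A, (‖·‖_i)) be a unital B_0-algebra with an orthogonal basis (e_n). If (t_n)_{n≥n_0} is a complex sequence with Σ_{n=n_0}^∞ |t_n − t_{n+1}| < ∞, then the series Σ_{n=n_0}^∞ t_n e_n converges in A. -/
open Filter Topology

/-- In a unital B₀-algebra with orthogonal basis, Σ tₙ eₙ converges whenever
Σ |tₙ − tₙ₊₁| < ∞. -/
theorem stmt10 {A : Type*} [Ring A] [Algebra ℂ A] [UniformSpace A] [T2Space A]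
    [IsUniformAddGroup A] [ContinuousSMul ℂ A] [CompleteSpace A]
    (p : ℕ → Seminorm ℂ A) (hp : WithSeminorms p)
    (hmono : ∀ i x, p i x ≤ p (i + 1) x)
    (hsub : ∀ i x y, p i (x * y) ≤ p (i + 1) x * p (i + 1) y)
    (e : ℕ → A) (coef : A → ℕ → ℂ)
    (horth : ∀ i j, e i * e j = if i = j then e i else 0)
    (hbasis : ∀ x, HasExpansion (coef x) e x)
    (huniq : ∀ x a, HasExpansion a e x → a = coef x)
    (n₀ : ℕ) (t : ℕ → ℂ)
    (h : Summable fun n => ‖t (n₀ + n) - t (n₀ + n + 1)‖) :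
    ∃ y : A, Tendsto (fun N => ∑ n ∈ Finset.Ico n₀ N, t n • e n) atTop (𝓝 y) := by
  classical
  -- left multiplication by `e j` is continuous
  have hmul : ∀ j : ℕ, Continuous fun x : A => e j * x := by
    intro j
    have hb : Seminorm.IsBounded p p (LinearMap.mulLeft ℂ (e j)) := by
      intro i
      refine ⟨{i + 1}, ⟨p (i + 1) (e j), apply_nonneg _ _⟩, ?_⟩
      intro x
      simp only [Seminorm.comp_apply, LinearMap.mulLeft_apply, Seminorm.smul_apply,
        Finset.sup_singleton, NNReal.smul_def, smul_eq_mul, NNReal.coe_mk]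
      exact hsub i (e j) x
    exact Seminorm.continuous_from_bounded hp hp (LinearMap.mulLeft ℂ (e j)) hb
  -- `coef 1 j • e j = e j`
  have hcoef : ∀ j : ℕ, coef 1 j • e j = e j := by
    intro j
    have h1 := hbasis 1
    have h2 : Tendsto (fun N => e j * ∑ n ∈ Finset.range N, coef 1 n • e n) atTop
        (𝓝 (e j * 1)) := (((hmul j).tendsto 1).comp h1)
    have h3 : (fun N => e j * ∑ n ∈ Finset.range N, coef 1 n • e n)
        =ᶠ[atTop] fun _ => coef 1 j • e j := by
      refine eventually_atTop.2 ⟨j + 1, fun N hN => ?_⟩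
      show e j * ∑ n ∈ Finset.range N, coef 1 n • e n = coef 1 j • e j
      rw [Finset.mul_sum]
      have : ∀ n ∈ Finset.range N,
          e j * (coef 1 n • e n) = if n = j then coef 1 n • e j else 0 := by
        intro n _
        rw [mul_smul_comm, horth j n]
        by_cases hjn : j = n
        · subst hjn; simp
        · simp [hjn, Ne.symm hjn]
      rw [Finset.sum_congr rfl this, Finset.sum_ite_eq' (Finset.range N) j]
      simp [Finset.mem_range.2 (Nat.lt_of_succ_le hN)]
    have h4 : Tendsto (fun _ : ℕ => coef 1 j • e j) atTop (𝓝 (e j * 1)) := h2.congr' h3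
    have := tendsto_nhds_unique h4 tendsto_const_nhds
    rw [mul_one] at this
    exact this.symm
  set E : ℕ → A := fun N => ∑ n ∈ Finset.range N, e n with hEdef
  have hE : Tendsto E atTop (𝓝 1) := by
    refine (hbasis 1).congr fun N => Finset.sum_congr rfl fun n _ => hcoef n
  -- the difference sequence
  set u : ℕ → ℂ := fun k => t k - t (k + 1) with hudef
  have hsum : Summable fun k => ‖u k‖ := by
    have h' : Summable fun n => ‖u (n + n₀)‖ :=
      h.congr fun n => by simp only [hudef, Nat.add_comm n₀ n]
    exact (summable_nat_add_iff n₀).mp h'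
  have hu : Summable u := Summable.of_norm hsum
  -- `t` converges
  have ht : Tendsto t atTop (𝓝 (t 0 - ∑' k, u k)) := by
    have h1 : Tendsto (fun N => ∑ k ∈ Finset.range N, u k) atTop (𝓝 (∑' k, u k)) :=
      hu.hasSum.tendsto_sum_nat
    have h2 : ∀ N, t N = t 0 - ∑ k ∈ Finset.range N, u k := by
      intro N
      have := Finset.sum_range_sub' t N
      simp only [hudef]
      rw [this]; ring
    exact (tendsto_const_nhds.sub h1).congr fun N => (h2 N).symm
  set v : ℕ → A := fun k => E (k + 1) - E n₀ with hvdef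
  have hv : Tendsto v atTop (𝓝 (1 - E n₀)) :=
    (hE.comp (tendsto_add_atTop_nat 1)).sub tendsto_const_nhds
  set T : ℕ → A := fun N => ∑ k ∈ Finset.Ico n₀ N, u k • v k with hTdef
  -- partial sums of real series
  set s : ℕ → ℝ := fun N => ∑ k ∈ Finset.range N, ‖u k‖ with hsdef
  have hsC : CauchySeq s := hsum.hasSum.tendsto_sum_nat.cauchySeq
  -- `T` is Cauchy
  have hTC : CauchySeq T := by
    rw [cauchySeq_iff_tendsto, uniformity_eq_comap_nhds_zero A, tendsto_comap_iff]
    rw [hp.tendsto_nhds]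
    intro i ε hε
    -- bound on `p i (v k)`
    obtain ⟨M, hM⟩ : ∃ M : ℝ, ∀ k, p i (v k) ≤ M := by
      have : Tendsto (fun k => p i (v k)) atTop (𝓝 (p i (1 - E n₀))) :=
        ((hp.continuous_seminorm i).tendsto _).comp hv
      obtain ⟨M, hM⟩ := this.bddAbove_range
      exact ⟨M, fun k => hM ⟨k, rfl⟩⟩
    set M' : ℝ := M + 1 with hM'def
    have hM'pos : 0 < M' := lt_of_le_of_lt (apply_nonneg (p i) (v 0)) (by
      calc p i (v 0) ≤ M := hM 0
        _ < M + 1 := by linarith)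
    have hMle : ∀ k, p i (v k) ≤ M' := fun k => (hM k).trans (by linarith)
    have psum : ∀ (f : ℕ → A) (S : Finset ℕ), p i (∑ k ∈ S, f k) ≤ ∑ k ∈ S, p i (f k) := by
      intro f S
      induction S using Finset.cons_induction with
      | empty => simp
      | cons a S ha ih =>
        rw [Finset.sum_cons, Finset.sum_cons]
        exact (map_add_le_add (p i) _ _).trans (by linarith)
    obtain ⟨N, hN⟩ := Metric.cauchySeq_iff.1 hsC (ε / M') (div_pos hε hM'pos)
    have key : ∀ m n : ℕ, max N n₀ ≤ m → m ≤ n → p i (T n - T m) < ε := by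
      intro m n hm hmn
      have hn₀m : n₀ ≤ m := le_trans (le_max_right _ _) hm
      have hTnm : T n - T m = ∑ k ∈ Finset.Ico m n, u k • v k := by
        simp only [hTdef]
        rw [← Finset.sum_Ico_consecutive _ hn₀m hmn]
        abel
      rw [hTnm]
      calc p i (∑ k ∈ Finset.Ico m n, u k • v k)
          ≤ ∑ k ∈ Finset.Ico m n, p i (u k • v k) := psum _ _
        _ ≤ ∑ k ∈ Finset.Ico m n, ‖u k‖ * M' := by
            refine Finset.sum_le_sum fun k _ => ?_
            rw [map_smul_eq_mul]
            exact mul_le_mul_of_nonneg_left (hMle k) (norm_nonneg _)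
        _ = (∑ k ∈ Finset.Ico m n, ‖u k‖) * M' := by rw [Finset.sum_mul]
        _ < ε := by
            have hsn : ∑ k ∈ Finset.Ico m n, ‖u k‖ = s n - s m := by
              simp only [hsdef]
              rw [Finset.sum_Ico_eq_sub _ hmn]
            have hd := hN m (le_trans (le_max_left _ _) hm) n
              (le_trans (le_trans (le_max_left _ _) hm) hmn)
            rw [Real.dist_eq] at hd
            have : s n - s m < ε / M' := lt_of_le_of_lt (le_abs_self _) (by
              rw [abs_sub_comm]; exact hd)
            calc (∑ k ∈ Finset.Ico m n, ‖u k‖) * M' = (s n - s m) * M' := by rw [hsn]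
              _ < ε / M' * M' := mul_lt_mul_of_pos_right this hM'pos
              _ = ε := div_mul_cancel₀ ε (ne_of_gt hM'pos)
    rw [eventually_atTop]
    refine ⟨(max N n₀, max N n₀), fun b hb => ?_⟩
    have hb1 : max N n₀ ≤ b.1 := hb.1
    have hb2 : max N n₀ ≤ b.2 := hb.2
    show p i ((Prod.map T T b).2 - (Prod.map T T b).1 - 0) < ε
    rw [sub_zero]
    rcases le_total b.1 b.2 with hc | hc
    · exact key b.1 b.2 hb1 hc
    · have : p i (T b.2 - T b.1) = p i (T b.1 - T b.2) := by
        rw [← map_neg_eq_map (p i), neg_sub]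
      rw [Prod.map_fst, Prod.map_snd, this]
      exact key b.2 b.1 hb2 hc
  -- limit of `T`
  obtain ⟨z, hz⟩ := cauchySeq_tendsto_of_complete hTC
  set τ : ℂ := t 0 - ∑' k, u k with hτdef
  refine ⟨z + τ • (1 - E n₀), ?_⟩
  have hsecond : Tendsto (fun N => t N • (E N - E n₀)) atTop (𝓝 (τ • (1 - E n₀))) :=
    ht.smul (hE.sub tendsto_const_nhds)
  have habel : ∀ N, n₀ ≤ N →
      ∑ n ∈ Finset.Ico n₀ N, t n • e n = T N + t N • (E N - E n₀) := by
    intro N hN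
    induction N, hN using Nat.le_induction with
    | base =>
      simp [hTdef]
    | succ N hN ih =>
      rw [Finset.sum_Ico_succ_top hN, ih]
      have hT' : T (N + 1) = T N + u N • v N := by
        simp only [hTdef]
        rw [Finset.sum_Ico_succ_top hN]
      have hE' : E (N + 1) = E N + e N := by
        simp only [hEdef]
        rw [Finset.sum_range_succ]
      have hv' : v N = E N + e N - E n₀ := by rw [hvdef]; simp only; rw [hE']
      rw [hT', hE', hv']
      simp only [hudef]
      module
  have heq : (fun N => ∑ n ∈ Finset.Ico n₀ N, t n • e n)
      =ᶠ[atTop] fun N => T N + t N • (E N - E n₀) :=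
    eventually_atTop.2 ⟨n₀, fun N hN => habel N hN⟩
  exact ((hz.add hsecond).congr' heq.symm)
end

section
/- Let A be a unital B_0-algebra with an orthogonal basis (e_n). Then every multiplicative linear functional on A is continuous; equivalently, every nonzero multiplicative linear functional equals some coefficient functional e_n^*. -/
open Filter Topology

set_option linter.unusedSectionVars false
set_option maxHeartbeats 1000000

section Aux

variable {A : Type*} [Ring A] [Algebra ℂ A] [UniformSpace A]
  [IsUniformAddGroup A] [ContinuousSMul ℂ A]

lemma aux_pmono (p : ℕ → Seminorm ℂ A) (hmono : ∀ i x, p i x ≤ p (i + 1) x) :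
    ∀ i j, i ≤ j → ∀ z, p i z ≤ p j z := by
  intro i j hij z
  induction j, hij using Nat.le_induction with
  | base => exact le_rfl
  | succ j hj ih => exact ih.trans (hmono j z)

lemma aux_mul_tendsto (p : ℕ → Seminorm ℂ A) (hp : WithSeminorms p)
    (hsub : ∀ i x y, p i (x * y) ≤ p (i + 1) x * p (i + 1) y)
    {u v : ℕ → A} {x y : A}
    (hu : Tendsto u atTop (𝓝 x)) (hv : Tendsto v atTop (𝓝 y)) :
    Tendsto (fun n => u n * v n) atTop (𝓝 (x * y)) := by
  rw [hp.tendsto_nhds] at hu hv ⊢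
  intro i ε hε
  set M : ℝ := p (i+1) x + p (i+1) y + 1 with hM
  have hM0 : 0 < M := by
    have n3 : 0 ≤ p (i+1) x := apply_nonneg _ _
    have n5 : 0 ≤ p (i+1) y := apply_nonneg _ _
    simp only [hM]; linarith
  filter_upwards [hu (i+1) (ε/(2*M)) (by positivity),
    hv (i+1) (min 1 (ε/(2*M))) (by positivity)] with n h1 h2
  have e1 : u n * v n - x * y = (u n - x) * v n + x * (v n - y) := by noncomm_ring
  have hb1 : p i ((u n - x) * v n) ≤ p (i+1) (u n - x) * p (i+1) (v n) := hsub _ _ _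
  have hb2 : p i (x * (v n - y)) ≤ p (i+1) x * p (i+1) (v n - y) := hsub _ _ _
  have hv' : p (i+1) (v n) ≤ p (i+1) y + 1 := by
    have h4 : p (i+1) (v n) ≤ p (i+1) (v n - y) + p (i+1) y := by
      simpa using map_add_le_add (p (i+1)) (v n - y) y
    have h2' : p (i+1) (v n - y) ≤ 1 := le_of_lt (lt_of_lt_of_le h2 (min_le_left _ _))
    linarith
  have h2'' : p (i+1) (v n - y) < ε/(2*M) := lt_of_lt_of_le h2 (min_le_right _ _)
  have n1 : 0 ≤ p (i+1) (u n - x) := apply_nonneg _ _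
  have n2 : 0 ≤ p (i+1) (v n) := apply_nonneg _ _
  have n3 : 0 ≤ p (i+1) x := apply_nonneg _ _
  have n4 : 0 ≤ p (i+1) (v n - y) := apply_nonneg _ _
  have n5 : 0 ≤ p (i+1) y := apply_nonneg _ _
  have hvM : p (i+1) (v n) ≤ M := by simp only [hM]; linarith
  have hxM : p (i+1) x ≤ M := by simp only [hM]; linarith
  have key1 : p (i+1) (u n - x) * p (i+1) (v n) ≤ p (i+1) (u n - x) * M :=
    mul_le_mul_of_nonneg_left hvM n1
  have key2 : p (i+1) x * p (i+1) (v n - y) ≤ M * p (i+1) (v n - y) :=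
    mul_le_mul_of_nonneg_right hxM n4
  have k1 : p (i+1) (u n - x) * M < (ε/(2*M)) * M := mul_lt_mul_of_pos_right h1 hM0
  have k2 : M * p (i+1) (v n - y) < M * (ε/(2*M)) := mul_lt_mul_of_pos_left h2'' hM0
  have eq1 : (ε/(2*M)) * M = ε/2 := by field_simp
  have eq2 : M * (ε/(2*M)) = ε/2 := by field_simp
  calc p i (u n * v n - x * y) ≤ p i ((u n - x) * v n) + p i (x * (v n - y)) := by
        rw [e1]; exact map_add_le_add _ _ _
    _ ≤ p (i+1) (u n - x) * p (i+1) (v n) + p (i+1) x * p (i+1) (v n - y) := add_le_add hb1 hb2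
    _ < ε := by
        have t1 : p (i+1) (u n - x) * p (i+1) (v n) < ε/2 := by
          calc p (i+1) (u n - x) * p (i+1) (v n) ≤ p (i+1) (u n - x) * M := key1
            _ < (ε/(2*M)) * M := k1
            _ = ε/2 := eq1
        have t2 : p (i+1) x * p (i+1) (v n - y) < ε/2 := by
          calc p (i+1) x * p (i+1) (v n - y) ≤ M * p (i+1) (v n - y) := key2
            _ < M * (ε/(2*M)) := k2
            _ = ε/2 := eq2
        linarith

lemma aux_exists_lim [CompleteSpace A]
    (p : ℕ → Seminorm ℂ A) (hp : WithSeminorms p)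
    (hmono : ∀ i x, p i x ≤ p (i + 1) x)
    (b : ℕ → A) (hb : ∀ i j, i ≤ j → 1 ≤ j → p i (b j) ≤ 2 * (8:ℝ)⁻¹ ^ j)
    (c : ℕ → ℂ) (C : ℝ) (hc : ∀ j, ‖c j‖ ≤ C * 4 ^ j) :
    ∃ x, Tendsto (fun J => ∑ j ∈ Finset.range J, c j • b j) atTop (𝓝 x) := by
  have hC0 : 0 ≤ C := by
    have h0 := (norm_nonneg (c 0)).trans (hc 0)
    simpa using h0
  have hsum : Summable (fun j => c j • b j) := by
    rw [summable_iff_vanishing]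
    intro U hU
    rcases (hp.mem_nhds_iff 0 U).1 hU with ⟨s, r, hr, hball⟩
    set I : ℕ := s.sup id with hI
    set g : ℕ → ℝ := fun j => ‖c j‖ * p I (b j) with hg
    set N : ℕ := max I 1 with hN
    have hgle : ∀ j, N ≤ j → g j ≤ (2*C) * (2:ℝ)⁻¹ ^ j := by
      intro j hj
      have h1 : p I (b j) ≤ 2 * (8:ℝ)⁻¹ ^ j :=
        hb I j (le_trans (le_max_left _ _) hj) (le_trans (le_max_right _ _) hj)
      have h2 : ‖c j‖ ≤ C * 4 ^ j := hc j
      calc g j ≤ (C * 4 ^ j) * (2 * (8:ℝ)⁻¹ ^ j) :=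
            mul_le_mul h2 h1 (apply_nonneg _ _) (by positivity)
        _ = (2*C) * ((4 * 8⁻¹ : ℝ)) ^ j := by rw [mul_pow]; ring
        _ = (2*C) * (2:ℝ)⁻¹ ^ j := by norm_num
    have hgsum : Summable g := by
      rw [← summable_nat_add_iff N]
      apply Summable.of_nonneg_of_le (fun j => by positivity)
        (fun j => hgle (j+N) (by omega))
      have hs : Summable (fun j : ℕ => ((2*C) * (2:ℝ)⁻¹ ^ N) * (2:ℝ)⁻¹ ^ j) :=
        (summable_geometric_of_lt_one (by norm_num) (by norm_num)).mul_left _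
      apply hs.congr
      intro j
      rw [pow_add]; ring
    obtain ⟨s', hs'⟩ := summable_iff_vanishing.1 hgsum (Set.Iio r) (Iio_mem_nhds hr)
    refine ⟨s' ∪ Finset.range N, fun t ht => ?_⟩
    apply hball
    rw [Seminorm.mem_ball_zero]
    have hd1 : Disjoint t s' := ht.mono_right Finset.subset_union_left
    have tri : ∀ (t : Finset ℕ), p I (∑ j ∈ t, c j • b j) ≤ ∑ j ∈ t, g j := by
      intro t
      classical
      induction t using Finset.induction_on with
      | empty => simp
      | insert j s hj ih =>
          rw [Finset.sum_insert hj, Finset.sum_insert hj]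
          exact (map_add_le_add _ _ _).trans
            (add_le_add (le_of_eq (map_smul_eq_mul _ _ _)) ih)
    have hsup : (s.sup p) (∑ j ∈ t, c j • b j) ≤ p I (∑ j ∈ t, c j • b j) := by
      apply Seminorm.finset_sup_apply_le (apply_nonneg _ _)
      intro i hi
      exact aux_pmono p hmono i I (Finset.le_sup (f := id) hi) _
    have hfin : (∑ j ∈ t, g j) < r := hs' t hd1
    exact lt_of_le_of_lt (hsup.trans (tri t)) hfin
  exact ⟨_, hsum.hasSum.tendsto_sum_nat⟩

end Aux

/-- Main theorem: on a unital B₀-algebra with orthogonal basis, every multiplicative linear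
functional is continuous, and every nonzero one is a coefficient functional. -/
theorem stmt14 {A : Type*} [Ring A] [Algebra ℂ A] [UniformSpace A] [T2Space A]
    [IsUniformAddGroup A] [ContinuousSMul ℂ A] [CompleteSpace A]
    (p : ℕ → Seminorm ℂ A) (hp : WithSeminorms p)
    (hmono : ∀ i x, p i x ≤ p (i + 1) x)
    (hsub : ∀ i x y, p i (x * y) ≤ p (i + 1) x * p (i + 1) y)
    (e : ℕ → A) (coef : A → ℕ → ℂ)
    (horth : ∀ i j, e i * e j = if i = j then e i else 0)
    (hbasis : ∀ x, HasExpansion (coef x) e x)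
    (huniq : ∀ x a, HasExpansion a e x → a = coef x) :
    ∀ f : A → ℂ, IsLinearMap ℂ f → (∀ x y, f (x * y) = f x * f y) →
      Continuous f ∧ (f ≠ 0 → ∃ n, f = fun x => coef x n) := by
  intro f hflin hfmul
  have hFapp : ∀ z, (IsLinearMap.mk' f hflin) z = f z := fun z => rfl
  have pmono := aux_pmono p hmono
  -- e n is never zero
  have hexp0 : HasExpansion (fun _ => (0:ℂ)) e 0 := by
    unfold HasExpansion
    have h : (fun N => ∑ n ∈ Finset.range N, (0:ℂ) • e n) = fun _ => (0:A) := by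
      funext N; simp
    rw [h]; exact tendsto_const_nhds
  have hcoef0 : (fun _ => (0:ℂ)) = coef 0 := huniq 0 _ hexp0
  have he_ne : ∀ n, e n ≠ 0 := by
    intro n h0
    have hexp : HasExpansion (fun k => if k = n then (1:ℂ) else 0) e 0 := by
      unfold HasExpansion
      have h : (fun N => ∑ k ∈ Finset.range N, (if k = n then (1:ℂ) else 0) • e k)
          = fun _ => (0:A) := by
        funext N
        apply Finset.sum_eq_zero
        intro k _
        by_cases hk : k = n
        · subst hk; simp [h0]
        · simp [hk]
      rw [h]; exact tendsto_const_nhds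
    have h1 := huniq 0 _ hexp
    rw [← hcoef0] at h1
    have h2 := congrFun h1 n
    simp at h2
  -- multiplication against a basis vector picks out the coefficient
  have hxe : ∀ x mm, x * e mm = coef x mm • e mm := by
    intro x mm
    have h1 : Tendsto (fun N => (∑ k ∈ Finset.range N, coef x k • e k) * e mm) atTop
        (𝓝 (x * e mm)) :=
      aux_mul_tendsto p hp hsub (hbasis x) tendsto_const_nhds
    have h2 : ∀ N, mm < N →
        (∑ k ∈ Finset.range N, coef x k • e k) * e mm = coef x mm • e mm := by
      intro N hN
      rw [Finset.sum_mul]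
      have hterm : ∀ k ∈ Finset.range N,
          (coef x k • e k) * e mm = if k = mm then coef x mm • e mm else 0 := by
        intro k _
        rw [smul_mul_assoc, horth]
        by_cases hk : k = mm
        · subst hk; simp
        · simp [hk]
      rw [Finset.sum_congr rfl hterm,
        Finset.sum_ite_eq' (Finset.range N) mm (fun _ => coef x mm • e mm)]
      simp [Finset.mem_range.mpr hN]
    have h3 : Tendsto (fun N => (∑ k ∈ Finset.range N, coef x k • e k) * e mm) atTop
        (𝓝 (coef x mm • e mm)) := by
      apply Tendsto.congr' _ (tendsto_const_nhds (x := coef x mm • e mm))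
      filter_upwards [eventually_gt_atTop mm] with N hN
      exact (h2 N hN).symm
    exact tendsto_nhds_unique h1 h3
  have hcoef1 : ∀ n, coef 1 n = 1 := by
    intro n
    by_contra hne
    have h : (coef 1 n - 1) • e n = 0 := by
      rw [sub_smul, one_smul, ← hxe 1 n, one_mul, sub_self]
    have h2 : e n = 0 := by
      have h3 := congrArg (fun z => (coef 1 n - 1)⁻¹ • z) h
      simpa [smul_smul, inv_mul_cancel₀ (sub_ne_zero.mpr hne)] using h3
    exact he_ne n h2
  by_cases hall : ∀ n, f (e n) = 0
  · -- hard case: show f = 0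
    have hf0 : ∀ x, f x = 0 := by
      by_contra hne
      push_neg at hne
      obtain ⟨z, hz⟩ := hne
      have hf1 : f 1 = 1 := by
        have h := hfmul z 1
        rw [mul_one] at h
        exact mul_left_cancel₀ hz (by rw [mul_one]; exact h.symm)
      -- partial sums of e tend to 1
      have hone : Tendsto (fun N => ∑ k ∈ Finset.range N, e k) atTop (𝓝 (1:A)) := by
        have h := hbasis 1
        unfold HasExpansion at h
        simpa only [hcoef1, one_smul] using h
      set t : ℕ → A := fun N => 1 - ∑ k ∈ Finset.range N, e k with hT
      have ht0 : Tendsto t atTop (𝓝 (0:A)) := by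
        have h := (tendsto_const_nhds (x := (1:A))).sub hone
        rw [sub_self] at h
        exact h
      have hstep : ∀ j M, ∃ nn, M < nn ∧ p j (t nn) ≤ (8:ℝ)⁻¹ ^ j := by
        intro j M
        have h := (hp.tendsto_nhds t 0).1 ht0 j ((8:ℝ)⁻¹ ^ j) (by positivity)
        simp only [sub_zero] at h
        obtain ⟨nn, h1, h2⟩ := ((eventually_gt_atTop M).and h).exists
        exact ⟨nn, h1, le_of_lt h2⟩
      choose gg hg1 hg2 using hstep
      set m : ℕ → ℕ := fun j => Nat.rec 0 (fun j prev => gg (j+1) prev) j with hm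
      have hm0 : m 0 = 0 := rfl
      have hmlt : ∀ j, m j < m (j+1) := fun j => hg1 (j+1) (m j)
      have hmt : ∀ j, p (j+1) (t (m (j+1))) ≤ (8:ℝ)⁻¹ ^ (j+1) := fun j => hg2 (j+1) (m j)
      have hmsm : StrictMono m := strictMono_nat_of_lt_succ hmlt
      set b : ℕ → A := fun j => t (m j) - t (m (j+1)) with hb
      have hbsum : ∀ J, ∑ j ∈ Finset.range J, b j = 1 - t (m J) := by
        intro J
        have h := Finset.sum_range_sub' (fun j => t (m j)) J
        simp only [hb]
        rw [h, hm0]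
        have ht1 : t 0 = 1 := by simp [hT]
        rw [ht1]
      have hbe : ∀ j, b j = ∑ k ∈ Finset.Ico (m j) (m (j+1)), e k := by
        intro j
        rw [Finset.sum_Ico_eq_sub _ (le_of_lt (hmlt j))]
        show t (m j) - t (m (j+1)) = _
        simp only [hT]
        abel
      have horthb : ∀ j k, b j * b k = if j = k then b j else 0 := by
        intro j k
        by_cases hjk : j = k
        · subst hjk
          rw [if_pos rfl, hbe j, Finset.sum_mul_sum]
          apply Finset.sum_congr rfl
          intro a ha
          have hterm : ∀ c ∈ Finset.Ico (m j) (m (j+1)),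
              e a * e c = if a = c then e a else 0 := fun c _ => horth a c
          rw [Finset.sum_congr rfl hterm,
            Finset.sum_ite_eq (Finset.Ico (m j) (m (j+1))) a (fun _ => e a), if_pos ha]
        · rw [if_neg hjk, hbe j, hbe k, Finset.sum_mul_sum]
          apply Finset.sum_eq_zero
          intro a ha
          apply Finset.sum_eq_zero
          intro c hc
          rw [horth a c, if_neg]
          rw [Finset.mem_Ico] at ha hc
          rcases lt_or_gt_of_ne hjk with h | h
          · have : m (j+1) ≤ m k := hmsm.monotone h
            omega
          · have : m (k+1) ≤ m j := hmsm.monotone h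
            omega
      have hfb : ∀ j, f (b j) = 0 := by
        intro j
        rw [hbe j, ← hFapp, map_sum]
        apply Finset.sum_eq_zero
        intro k _
        rw [hFapp]
        exact hall k
      have hpb : ∀ i j, i ≤ j → 1 ≤ j → p i (b j) ≤ 2 * (8:ℝ)⁻¹ ^ j := by
        intro i j hij h1j
        obtain ⟨j', rfl⟩ : ∃ j', j = j' + 1 := ⟨j - 1, by omega⟩
        have e1 : p i (b (j'+1)) ≤ p i (t (m (j'+1))) + p i (t (m (j'+1+1))) :=
          map_sub_le_add _ _ _
        have e2 : p i (t (m (j'+1))) ≤ (8:ℝ)⁻¹ ^ (j'+1) :=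
          le_trans (pmono i (j'+1) hij _) (hmt j')
        have e3 : p i (t (m (j'+1+1))) ≤ (8:ℝ)⁻¹ ^ (j'+1+1) :=
          le_trans (pmono i (j'+1+1) (by omega) _) (hmt (j'+1))
        have e4 : (8:ℝ)⁻¹ ^ (j'+1+1) ≤ (8:ℝ)⁻¹ ^ (j'+1) :=
          pow_le_pow_of_le_one (by norm_num) (by norm_num) (by omega)
        linarith
      have hser : ∀ (c : ℕ → ℂ) (C : ℝ), (∀ j, ‖c j‖ ≤ C * 4 ^ j) →
          ∃ x, Tendsto (fun J => ∑ j ∈ Finset.range J, c j • b j) atTop (𝓝 x) :=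
        fun c C hc => aux_exists_lim p hp hmono b hpb c C hc
      have hmulser : ∀ (c d : ℕ → ℂ) (xx yy : A),
          Tendsto (fun J => ∑ j ∈ Finset.range J, c j • b j) atTop (𝓝 xx) →
          Tendsto (fun J => ∑ j ∈ Finset.range J, d j • b j) atTop (𝓝 yy) →
          Tendsto (fun J => ∑ j ∈ Finset.range J, (c j * d j) • b j) atTop (𝓝 (xx * yy)) := by
        intro c d xx yy hcx hdy
        have key : ∀ J, (∑ j ∈ Finset.range J, c j • b j) * (∑ j ∈ Finset.range J, d j • b j)
            = ∑ j ∈ Finset.range J, (c j * d j) • b j := by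
          intro J
          rw [Finset.sum_mul_sum]
          apply Finset.sum_congr rfl
          intro j hj
          have hterm : ∀ k ∈ Finset.range J,
              (c j • b j) * (d k • b k) = if j = k then (c j * d k) • b j else 0 := by
            intro k _
            rw [smul_mul_smul_comm, horthb]
            by_cases h : j = k
            · simp [h]
            · simp [h]
          rw [Finset.sum_congr rfl hterm,
            Finset.sum_ite_eq (Finset.range J) j (fun k => (c j * d k) • b j), if_pos hj]
        exact (aux_mul_tendsto p hp hsub hcx hdy).congr key
      have honeser : Tendsto (fun J => ∑ j ∈ Finset.range J, (1:ℂ) • b j) atTop (𝓝 (1:A)) := by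
        have h1 : Tendsto (fun J => 1 - t (m J)) atTop (𝓝 (1:A)) := by
          have hmtop : Tendsto m atTop atTop := hmsm.tendsto_atTop
          have h := (tendsto_const_nhds (x := (1:A))).sub (ht0.comp hmtop)
          rw [sub_zero] at h
          exact h
        refine h1.congr fun J => ?_
        simp only [one_smul]
        exact (hbsum J).symm
      have hkill : ∀ (c : ℕ → ℂ) (w : A) (C δ : ℝ), 0 < δ →
          (∀ j, ‖c j‖ ≤ C * 4 ^ j) → (∀ j, δ ≤ ‖c j‖) →
          Tendsto (fun J => ∑ j ∈ Finset.range J, c j • b j) atTop (𝓝 w) →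
          f w ≠ 0 := by
        intro c w C δ hδ hupper hlower hw
        have hcne : ∀ j, c j ≠ 0 := fun j =>
          norm_pos_iff.1 (lt_of_lt_of_le hδ (hlower j))
        obtain ⟨y, hy⟩ := hser (fun j => (c j)⁻¹) δ⁻¹ (by
          intro j
          rw [norm_inv]
          have h1 : ‖c j‖⁻¹ ≤ δ⁻¹ := inv_anti₀ hδ (hlower j)
          have h2 : (1:ℝ) ≤ 4 ^ j := one_le_pow₀ (by norm_num)
          calc ‖c j‖⁻¹ ≤ δ⁻¹ := h1
            _ ≤ δ⁻¹ * 4 ^ j := le_mul_of_one_le_right (by positivity) h2)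
        have hwy : w * y = 1 := by
          have h1 := hmulser c (fun j => (c j)⁻¹) w y hw hy
          have h2 : (fun J => ∑ j ∈ Finset.range J, (c j * (c j)⁻¹) • b j)
              = fun J => ∑ j ∈ Finset.range J, (1:ℂ) • b j := by
            funext J
            apply Finset.sum_congr rfl
            intro j _
            rw [mul_inv_cancel₀ (hcne j)]
          rw [h2] at h1
          exact tendsto_nhds_unique h1 honeser
        intro hfw
        have h3 : f (w * y) = 1 := by rw [hwy, hf1]
        rw [hfmul, hfw, zero_mul] at h3
        exact zero_ne_one h3
      have hc2 : ∀ j, ‖((2:ℂ)^j)‖ ≤ (1:ℝ) * 4 ^ j := by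
        intro j
        rw [norm_pow, one_mul]
        have : ‖(2:ℂ)‖ = 2 := by norm_num
        rw [this]
        exact pow_le_pow_left₀ (by norm_num) (by norm_num) j
      obtain ⟨x, hx⟩ := hser (fun j => (2:ℂ)^j) 1 hc2
      set lam : ℂ := f x with hlam
      -- norms of differences of powers of two
      have hpowdiff : ∀ j k : ℕ, j ≠ k → (1:ℝ) ≤ ‖(2:ℂ)^j - (2:ℂ)^k‖ := by
        intro j k hjk
        have hz : ((2:ℤ)^j - (2:ℤ)^k) ≠ 0 := by
          intro hc
          apply hjk
          have : (2:ℤ)^j = 2^k := by linarith [sub_eq_zero.1 hc]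
          exact Nat.pow_right_injective le_rfl (by exact_mod_cast this)
        have h1 : (1:ℤ) ≤ |(2:ℤ)^j - (2:ℤ)^k| := Int.one_le_abs hz
        have h2 : ‖(2:ℂ)^j - (2:ℂ)^k‖ = |((2:ℤ)^j - (2:ℤ)^k : ℤ)| := by
          have : ((2:ℂ)^j - (2:ℂ)^k) = ((((2:ℤ)^j - (2:ℤ)^k) : ℤ) : ℂ) := by push_cast; ring
          rw [this, Complex.norm_intCast]
          norm_cast
        rw [h2]
        exact_mod_cast h1
      by_cases hcase : ∃ mm, (2:ℂ)^mm = lam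
      · obtain ⟨mm, hmm⟩ := hcase
        set c' : ℕ → ℂ := fun j => ((2:ℂ)^j - lam) + (if j = mm then 1 else 0) with hc'
        have hw : Tendsto (fun J => ∑ j ∈ Finset.range J, c' j • b j) atTop
            (𝓝 (x - lam • 1 + b mm)) := by
          have h1 : ∀ J, ∑ j ∈ Finset.range J, c' j • b j
              = ((∑ j ∈ Finset.range J, ((2:ℂ)^j) • b j)
                  - lam • (∑ j ∈ Finset.range J, (1:ℂ) • b j))
                + (if mm ∈ Finset.range J then b mm else 0) := by
            intro J
            rw [Finset.smul_sum, ← Finset.sum_sub_distrib, ← Finset.sum_ite_eq'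
              (Finset.range J) mm (fun k => b k), ← Finset.sum_add_distrib]
            apply Finset.sum_congr rfl
            intro j _
            simp only [hc']
            rw [add_smul, sub_smul]
            by_cases h : j = mm
            · subst h; simp
            · simp [h]
          have h2 : Tendsto (fun J => if mm ∈ Finset.range J then b mm else 0) atTop
              (𝓝 (b mm)) := by
            apply Tendsto.congr' _ (tendsto_const_nhds (x := b mm))
            filter_upwards [eventually_gt_atTop mm] with J hJ
            rw [if_pos (Finset.mem_range.mpr hJ)]
          have h3 := (hx.sub (honeser.const_smul lam)).add h2
          exact h3.congr fun J => (h1 J).symm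
        have hfw : f (x - lam • 1 + b mm) = 0 := by
          have h4 : f (x - lam • 1 + b mm)
              = f x - lam * f 1 + f (b mm) := by
            rw [← hFapp, map_add, map_sub, map_smul, hFapp, hFapp, hFapp, smul_eq_mul]
          rw [h4, hf1, hfb mm, mul_one, ← hlam, sub_self, zero_add]
        have hupper : ∀ j, ‖c' j‖ ≤ (2 + ‖lam‖) * 4 ^ j := by
          intro j
          have h1 : ‖c' j‖ ≤ ‖(2:ℂ)^j‖ + ‖lam‖ + 1 := by
            simp only [hc']
            refine le_trans (norm_add_le _ _) ?_
            have := norm_sub_le ((2:ℂ)^j) lam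
            have h2 : ‖(if j = mm then (1:ℂ) else 0)‖ ≤ 1 := by
              split <;> simp
            linarith
          have h2 : ‖(2:ℂ)^j‖ ≤ 4 ^ j := by simpa using hc2 j
          have h3 : (1:ℝ) ≤ 4 ^ j := one_le_pow₀ (by norm_num)
          have h4 : ‖lam‖ ≤ ‖lam‖ * 4 ^ j :=
            le_mul_of_one_le_right (norm_nonneg _) h3
          calc ‖c' j‖ ≤ ‖(2:ℂ)^j‖ + ‖lam‖ + 1 := h1
            _ ≤ 4 ^ j + ‖lam‖ * 4 ^ j + 4 ^ j := by linarith
            _ = (2 + ‖lam‖) * 4 ^ j := by ring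
        have hlower : ∀ j, (1:ℝ) ≤ ‖c' j‖ := by
          intro j
          by_cases h : j = mm
          · subst h
            simp only [hc', if_pos rfl, ← hmm]
            simp
          · simp only [hc', if_neg h, add_zero, ← hmm]
            exact hpowdiff j mm h
        exact (hkill c' _ (2 + ‖lam‖) 1 one_pos hupper hlower hw) hfw
      · push_neg at hcase
        set c' : ℕ → ℂ := fun j => (2:ℂ)^j - lam with hc'
        have hw : Tendsto (fun J => ∑ j ∈ Finset.range J, c' j • b j) atTop
            (𝓝 (x - lam • 1)) := by
          have h1 : ∀ J, ∑ j ∈ Finset.range J, c' j • b j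
              = (∑ j ∈ Finset.range J, ((2:ℂ)^j) • b j)
                  - lam • (∑ j ∈ Finset.range J, (1:ℂ) • b j) := by
            intro J
            rw [Finset.smul_sum, ← Finset.sum_sub_distrib]
            apply Finset.sum_congr rfl
            intro j _
            simp only [hc']
            rw [sub_smul]
            simp
          have h3 := hx.sub (honeser.const_smul lam)
          exact h3.congr fun J => (h1 J).symm
        have hfw : f (x - lam • 1) = 0 := by
          have h4 : f (x - lam • 1) = f x - lam * f 1 := by
            rw [← hFapp, map_sub, map_smul, hFapp, hFapp, smul_eq_mul]
          rw [h4, hf1, mul_one, ← hlam, sub_self]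
        obtain ⟨K, hK⟩ := pow_unbounded_of_one_lt (‖lam‖ + 1) (one_lt_two (α := ℝ))
        have hne' : ∀ j, c' j ≠ 0 := fun j => sub_ne_zero.mpr (hcase j)
        set δ : ℝ := min 1 ((Finset.range (K+1)).inf'
          ⟨0, Finset.mem_range.mpr (by omega)⟩ (fun j => ‖c' j‖)) with hδdef
        have hδpos : 0 < δ := by
          rw [hδdef]
          apply lt_min one_pos
          refine (Finset.lt_inf'_iff _).mpr ?_
          intro j _
          exact norm_pos_iff.mpr (hne' j)
        have hlower : ∀ j, δ ≤ ‖c' j‖ := by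
          intro j
          by_cases hj : j ≤ K
          · refine le_trans (min_le_right _ _) ?_
            exact Finset.inf'_le _ (Finset.mem_range.mpr (by omega))
          · refine le_trans (min_le_left _ _) ?_
            push_neg at hj
            have h1 : (2:ℝ)^K ≤ (2:ℝ)^j := pow_le_pow_right₀ (by norm_num) (by omega)
            have h2 : ‖(2:ℂ)^j‖ - ‖lam‖ ≤ ‖c' j‖ := by
              simp only [hc']
              exact norm_sub_norm_le _ _
            have h3 : ‖(2:ℂ)^j‖ = (2:ℝ)^j := by
              rw [norm_pow]
              norm_num
            rw [h3] at h2
            linarith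
        have hupper : ∀ j, ‖c' j‖ ≤ (1 + ‖lam‖) * 4 ^ j := by
          intro j
          have h1 : ‖c' j‖ ≤ ‖(2:ℂ)^j‖ + ‖lam‖ := norm_sub_le _ _
          have h2 : ‖(2:ℂ)^j‖ ≤ 4 ^ j := by simpa using hc2 j
          have h3 : (1:ℝ) ≤ 4 ^ j := one_le_pow₀ (by norm_num)
          have h4 : ‖lam‖ ≤ ‖lam‖ * 4 ^ j :=
            le_mul_of_one_le_right (norm_nonneg _) h3
          calc ‖c' j‖ ≤ ‖(2:ℂ)^j‖ + ‖lam‖ := h1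
            _ ≤ 4 ^ j + ‖lam‖ * 4 ^ j := by linarith
            _ = (1 + ‖lam‖) * 4 ^ j := by ring
        exact (hkill c' _ (1 + ‖lam‖) δ hδpos hupper hlower hw) hfw
    constructor
    · have hfz : f = fun _ => (0:ℂ) := funext hf0
      rw [hfz]; exact continuous_const
    · intro hfne
      exact absurd (by funext x; simpa using hf0 x) hfne
  · push_neg at hall
    obtain ⟨n, hn⟩ := hall
    have hen : f (e n) = 1 := by
      have h := hfmul (e n) (e n)
      rw [horth n n, if_pos rfl] at h
      exact mul_left_cancel₀ hn (by rw [mul_one]; exact h.symm)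
    have hfeq : ∀ x, f x = coef x n := by
      intro x
      calc f x = f x * f (e n) := by rw [hen, mul_one]
        _ = f (x * e n) := (hfmul _ _).symm
        _ = f (coef x n • e n) := by rw [hxe x n]
        _ = coef x n * f (e n) := by
              rw [← hFapp, map_smul, hFapp, smul_eq_mul]
        _ = coef x n := by rw [hen, mul_one]
    have hi : ∃ i, p i (e n) ≠ 0 := by
      by_contra hall2
      push_neg at hall2
      have h1 : Tendsto (fun _ : ℕ => e n) atTop (𝓝 (0:A)) := by
        rw [hp.tendsto_nhds]
        intro i ε hε
        refine Eventually.of_forall fun _ => ?_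
        simpa [hall2 i] using hε
      exact he_ne n (tendsto_nhds_unique tendsto_const_nhds h1)
    obtain ⟨i, hi⟩ := hi
    have hpi : 0 < p i (e n) := lt_of_le_of_ne (apply_nonneg _ _) (Ne.symm hi)
    have hbound : ∀ x, ‖f x‖ ≤ (p (i+1) (e n) / p i (e n)) * p (i+1) x := by
      intro x
      have h1 : p i (x * e n) ≤ p (i+1) x * p (i+1) (e n) := hsub i x (e n)
      rw [hxe x n, map_smul_eq_mul] at h1
      rw [hfeq x, div_mul_eq_mul_div, le_div_iff₀ hpi]
      calc ‖coef x n‖ * p i (e n) ≤ p (i+1) x * p (i+1) (e n) := h1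
        _ = p (i+1) (e n) * p (i+1) x := by ring
    have hcont : Continuous f := by
      rw [continuous_iff_continuousAt]
      intro x₀
      have hsub0 : Tendsto (fun x => f x - f x₀) (𝓝 x₀) (𝓝 0) := by
        apply squeeze_zero_norm
          (a := fun x => (p (i+1) (e n) / p i (e n)) * p (i+1) (x - x₀))
        · intro x
          have hx : f x - f x₀ = f (x - x₀) := by
            rw [← hFapp x, ← hFapp x₀, ← hFapp (x - x₀), map_sub]
          rw [hx]; exact hbound _
        · have hc : Continuous
              (fun x => (p (i+1) (e n) / p i (e n)) * p (i+1) (x - x₀)) :=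
            continuous_const.mul
              ((hp.continuous_seminorm (i+1)).comp (continuous_id.sub continuous_const))
          have h4 := hc.tendsto x₀
          simpa using h4
      have h5 := hsub0.add (tendsto_const_nhds (x := f x₀))
      simp only [sub_add_cancel, zero_add] at h5
      exact h5
    exact ⟨hcont, fun _ => ⟨n, funext hfeq⟩⟩
end

section
/- Let A be a unital B_0-algebra with an orthogonal basis (e_n) and let f be a multiplicative linear functional on A that is not continuous (equivalently, f ≠ e_n^* for all n). Then f(e_n) = 0 for all n. -/
open Filter Topology

/-- A discontinuous multiplicative linear functional vanishes on all basis vectors. -/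
theorem stmt15 {A : Type*} [Ring A] [Algebra ℂ A] [UniformSpace A] [T2Space A]
    [IsUniformAddGroup A] [ContinuousSMul ℂ A] [CompleteSpace A]
    (p : ℕ → Seminorm ℂ A) (hp : WithSeminorms p)
    (hmono : ∀ i x, p i x ≤ p (i + 1) x)
    (hsub : ∀ i x y, p i (x * y) ≤ p (i + 1) x * p (i + 1) y)
    (e : ℕ → A) (coef : A → ℕ → ℂ)
    (horth : ∀ i j, e i * e j = if i = j then e i else 0)
    (hbasis : ∀ x, HasExpansion (coef x) e x)
    (huniq : ∀ x a, HasExpansion a e x → a = coef x)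
    (f : A → ℂ) (hf : IsLinearMap ℂ f) (hfm : ∀ x y, f (x * y) = f x * f y)
    (hnc : ¬ Continuous f) :
    ∀ n, f (e n) = 0 := by
  intro n
  by_contra hne
  -- f (e n) is idempotent, hence equals 1
  have hidem : f (e n) * f (e n) = f (e n) := by
    rw [← hfm, horth]; simp
  have h1 : f (e n) = 1 := by
    have := mul_left_cancel₀ hne (by rw [hidem, mul_one] : f (e n) * f (e n) = f (e n) * 1)
    exact this
  have hen : e n ≠ 0 := by
    intro h0
    apply hne
    rw [h0]
    simpa using (IsLinearMap.mk' f hf).map_zero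
  -- right multiplication by e n is continuous
  have hFcont : Continuous fun x : A => x * e n := by
    have : Continuous (LinearMap.mulRight ℂ (e n)) := by
      refine Seminorm.continuous_from_bounded hp hp _ (fun i => ⟨{i + 1},
        ⟨p (i + 1) (e n), apply_nonneg _ _⟩, ?_⟩)
      intro x
      simp only [Seminorm.comp_apply, LinearMap.mulRight_apply, Seminorm.smul_apply,
        Finset.sup_singleton, NNReal.smul_def, smul_eq_mul, NNReal.coe_mk]
      calc p i (x * e n) ≤ p (i + 1) x * p (i + 1) (e n) := hsub i x (e n)
        _ = p (i + 1) (e n) * p (i + 1) x := mul_comm _ _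
    exact this
  -- key: x * e n = coef x n • e n
  have key : ∀ x : A, x * e n = coef x n • e n := by
    intro x
    have h1' : Tendsto (fun N => (∑ m ∈ Finset.range N, coef x m • e m) * e n)
        atTop (𝓝 (x * e n)) := (hFcont.tendsto x).comp (hbasis x)
    have h2 : ∀ᶠ N in atTop, (∑ m ∈ Finset.range N, coef x m • e m) * e n
        = coef x n • e n := by
      filter_upwards [eventually_ge_atTop (n + 1)] with N hN
      rw [Finset.sum_mul]
      have : ∀ m ∈ Finset.range N, coef x m • e m * e n
          = if m = n then coef x n • e n else 0 := by
        intro m _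
        rw [smul_mul_assoc, horth]
        split_ifs with h
        · rw [h]
        · simp
      rw [Finset.sum_congr rfl this, Finset.sum_ite_eq' (Finset.range N) n
        (fun _ => coef x n • e n)]
      simp [Nat.lt_of_succ_le hN]
    exact tendsto_nhds_unique h1' (tendsto_const_nhds.congr' (h2.mono fun N hN => hN.symm))
  -- hence f x = coef x n
  have hfc : ∀ x : A, f x = coef x n := by
    intro x
    have : f (x * e n) = f x := by rw [hfm, h1, mul_one]
    rw [key] at this
    rw [← this, hf.map_smul, smul_eq_mul, h1, mul_one]
  -- choose a seminorm not vanishing on e n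
  obtain ⟨i, hi⟩ := hp.separating_of_T1 (e n) hen
  have hipos : 0 < p i (e n) := lt_of_le_of_ne (apply_nonneg _ _) (Ne.symm hi)
  -- f is bounded, hence continuous
  apply hnc
  have : Continuous (IsLinearMap.mk' f hf) := by
    refine Seminorm.cont_withSeminorms_normedSpace ℂ hp _
      ⟨{i + 1}, ⟨p (i + 1) (e n) / p i (e n), div_nonneg (apply_nonneg _ _) hipos.le⟩, ?_⟩
    intro x
    simp only [Seminorm.comp_apply, Seminorm.smul_apply, Finset.sup_singleton,
      NNReal.smul_def, smul_eq_mul, NNReal.coe_mk, coe_normSeminorm, IsLinearMap.mk'_apply]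
    have hx : ‖f x‖ * p i (e n) ≤ p (i + 1) x * p (i + 1) (e n) := by
      calc ‖f x‖ * p i (e n) = p i (f x • e n) := by
            rw [map_smul_eq_mul]
          _ = p i (x * e n) := by rw [hfc x, ← key]
          _ ≤ p (i + 1) x * p (i + 1) (e n) := hsub i x (e n)
    change ‖f x‖ ≤ p (i + 1) (e n) / p i (e n) * p (i + 1) x
    rw [div_mul_eq_mul_div, le_div_iff₀ hipos]
    calc ‖f x‖ * p i (e n) ≤ p (i + 1) x * p (i + 1) (e n) := hx
      _ = p (i + 1) (e n) * p (i + 1) x := mul_comm _ _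
  exact this
end
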